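/- Fix z ∈ ℂ and let g(r, s) be a holomorphic function of two complex variables on an open set where (z² - r)(z² - s) ≠ 0, satisfying g(r,s)² = 1/((z² - r)(z² - s)) and g nowhere zero. Then g satisfies the partial differential equation g_{rs} = (g_r - g_s)/(2(r - s)) at all points with r ≠ s. (Here subscripts denote partial derivatives in r and s.) -/

import Mathlib

lemma deriv_fst_aux
    (z : ℂ) (Ω : Set (ℂ × ℂ)) (hΩ : IsOpen Ω)
    (g : ℂ → ℂ → ℂ)
    (hne : ∀ p ∈ Ω, z ^ 2 - p.1 ≠ 0 ∧ z ^ 2 - p.2 ≠ 0)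
    (hg : AnalyticOnNhd ℂ (fun p : ℂ × ℂ => g p.1 p.2) Ω)
    (hsq : ∀ p ∈ Ω, (g p.1 p.2) ^ 2 = 1 / ((z ^ 2 - p.1) * (z ^ 2 - p.2)))
    (hnz : ∀ p ∈ Ω, g p.1 p.2 ≠ 0)
    (p : ℂ × ℂ) (hp : p ∈ Ω) :
    deriv (fun r' => g r' p.2) p.1 = g p.1 p.2 / (2 * (z ^ 2 - p.1)) := by
  obtain ⟨h1, h2⟩ := hne p hp
  set G := g p.1 p.2 with hG
  have hga : DifferentiableAt ℂ (fun q : ℂ × ℂ => g q.1 q.2) p := (hg p hp).differentiableAt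
  have hline : DifferentiableAt ℂ (fun r' : ℂ => ((r', p.2) : ℂ × ℂ)) p.1 :=
    differentiableAt_id.prodMk (differentiableAt_const _)
  have hd : DifferentiableAt ℂ (fun r' => g r' p.2) p.1 := by
    exact (show DifferentiableAt ℂ (fun q : ℂ × ℂ => g q.1 q.2) (p.1, p.2) from hga).comp p.1 hline
  set D := deriv (fun r' => g r' p.2) p.1 with hD
  have hopen : IsOpen {r' : ℂ | ((r', p.2) : ℂ × ℂ) ∈ Ω} :=
    hΩ.preimage (by fun_prop)
  have hmem1 : p.1 ∈ {r' : ℂ | ((r', p.2) : ℂ × ℂ) ∈ Ω} := by simp [hp]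
  have hev : (fun r' => (g r' p.2) ^ 2) =ᶠ[nhds p.1]
      (fun r' => 1 / ((z ^ 2 - r') * (z ^ 2 - p.2))) := by
    filter_upwards [hopen.mem_nhds hmem1] with r' hr'
    exact hsq (r', p.2) hr'
  have hL : HasDerivAt (fun r' => (g r' p.2) ^ 2) (2 * G * D) p.1 := by
    have := hd.hasDerivAt.fun_pow 2
    simpa [hG, hD, mul_comm, mul_assoc] using this
  have hR : HasDerivAt (fun r' : ℂ => ((z ^ 2 - r') * (z ^ 2 - p.2))⁻¹)
      (-((-1) * (z ^ 2 - p.2)) / (((z ^ 2 - p.1) * (z ^ 2 - p.2)) ^ 2)) p.1 := by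
    have h0 : HasDerivAt (fun r' : ℂ => (z ^ 2 - r') * (z ^ 2 - p.2)) ((-1) * (z ^ 2 - p.2)) p.1 :=
      ((hasDerivAt_id p.1).const_sub (z ^ 2)).mul_const _
    exact h0.inv (mul_ne_zero h1 h2)
  have key : 2 * G * D = (z ^ 2 - p.2) / (((z ^ 2 - p.1) * (z ^ 2 - p.2)) ^ 2) := by
    have heq := hev.deriv_eq
    rw [hL.deriv] at heq
    rw [heq]
    have hderiv : deriv (fun r' => 1 / ((z ^ 2 - r') * (z ^ 2 - p.2))) p.1
        = -((-1) * (z ^ 2 - p.2)) / (((z ^ 2 - p.1) * (z ^ 2 - p.2)) ^ 2) := by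
      simpa [one_div] using hR.deriv
    rw [hderiv]; ring
  have hG2 : G ^ 2 = 1 / ((z ^ 2 - p.1) * (z ^ 2 - p.2)) := hsq p hp
  have hGne : G ≠ 0 := hnz p hp
  rw [eq_div_iff (by exact mul_ne_zero two_ne_zero h1 : (2 : ℂ) * (z ^ 2 - p.1) ≠ 0)]
  refine mul_left_cancel₀ hGne ?_
  have hABne : (z ^ 2 - p.1) * (z ^ 2 - p.2) ^ 2 ≠ 0 :=
    mul_ne_zero h1 (pow_ne_zero 2 h2)
  refine mul_right_cancel₀ hABne ?_
  field_simp at key hG2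
  linear_combination (z ^ 2 - p.2) * key - (z ^ 2 - p.2) * hG2

lemma deriv_snd_aux
    (z : ℂ) (Ω : Set (ℂ × ℂ)) (hΩ : IsOpen Ω)
    (g : ℂ → ℂ → ℂ)
    (hne : ∀ p ∈ Ω, z ^ 2 - p.1 ≠ 0 ∧ z ^ 2 - p.2 ≠ 0)
    (hg : AnalyticOnNhd ℂ (fun p : ℂ × ℂ => g p.1 p.2) Ω)
    (hsq : ∀ p ∈ Ω, (g p.1 p.2) ^ 2 = 1 / ((z ^ 2 - p.1) * (z ^ 2 - p.2)))
    (hnz : ∀ p ∈ Ω, g p.1 p.2 ≠ 0)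
    (p : ℂ × ℂ) (hp : p ∈ Ω) :
    deriv (fun s' => g p.1 s') p.2 = g p.1 p.2 / (2 * (z ^ 2 - p.2)) := by
  have := deriv_fst_aux z (Prod.swap ⁻¹' Ω) (hΩ.preimage continuous_swap)
    (fun a b => g b a)
    (fun q hq => ⟨(hne q.swap hq).2, (hne q.swap hq).1⟩)
    (fun q hq => (hg q.swap hq).comp (analyticAt_snd.prod analyticAt_fst))
    (fun q hq => by have := hsq q.swap hq; simpa [mul_comm] using this)
    (fun q hq => hnz q.swap hq)
    p.swap (by simpa using hp)
  simpa using this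

theorem branch_of_inverse_sqrt_satisfies_pde
    (z : ℂ) (Ω : Set (ℂ × ℂ)) (hΩ : IsOpen Ω)
    (g : ℂ → ℂ → ℂ)
    (hne : ∀ p ∈ Ω, z ^ 2 - p.1 ≠ 0 ∧ z ^ 2 - p.2 ≠ 0)
    (hg : AnalyticOnNhd ℂ (fun p : ℂ × ℂ => g p.1 p.2) Ω)
    (hsq : ∀ p ∈ Ω, (g p.1 p.2) ^ 2 = 1 / ((z ^ 2 - p.1) * (z ^ 2 - p.2)))
    (hnz : ∀ p ∈ Ω, g p.1 p.2 ≠ 0)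
    (r s : ℂ) (hmem : (r, s) ∈ Ω) (hrs : r ≠ s) :
    deriv (fun s' => deriv (fun r' => g r' s') r) s
      = (deriv (fun r' => g r' s) r - deriv (fun s' => g r s') s) / (2 * (r - s)) := by
  obtain ⟨h1, h2⟩ := hne (r, s) hmem
  have h1' : z ^ 2 - r ≠ 0 := h1
  have h2' : z ^ 2 - s ≠ 0 := h2
  have hopen : IsOpen {s' : ℂ | ((r, s') : ℂ × ℂ) ∈ Ω} := hΩ.preimage (by fun_prop)
  have hmem2 : s ∈ {s' : ℂ | ((r, s') : ℂ × ℂ) ∈ Ω} := hmem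
  have hev : (fun s' => deriv (fun r' => g r' s') r) =ᶠ[nhds s]
      (fun s' => g r s' / (2 * (z ^ 2 - r))) := by
    filter_upwards [hopen.mem_nhds hmem2] with s' hs'
    exact deriv_fst_aux z Ω hΩ g hne hg hsq hnz (r, s') hs'
  rw [hev.deriv_eq, deriv_div_const]
  have A1 : deriv (fun r' => g r' s) r = g r s / (2 * (z ^ 2 - r)) :=
    deriv_fst_aux z Ω hΩ g hne hg hsq hnz (r, s) hmem
  have A2 : deriv (fun s' => g r s') s = g r s / (2 * (z ^ 2 - s)) :=
    deriv_snd_aux z Ω hΩ g hne hg hsq hnz (r, s) hmem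
  rw [A1, A2]
  have hrs' : r - s ≠ 0 := sub_ne_zero.mpr hrs
  field_simp
  ring
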